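/- For every natural number m ≥ 1, the total Chern class relation c(g^m ⊗ (β - n)) in H*(S^{2m} ∧ M) reduces, using y_m² = 0, to the combinatorial identity: ∏_k (1 + (m-1)!·y·((1+s_k)^{-m} - 1)) = 1 + (m-1)!·y·∑_{i≥1} (-1)^i · C(m+i-1, i) · p_i, in the truncated polynomial ring where y² = 0, where p_i = ∑_k s_k^i. -/

import Mathlib

lemma prod_one_add_nilpotent {A : Type*} [CommRing A] (y : A) (hy : y ^ 2 = 0)
    {ι : Type*} (t : Finset ι) (f : ι → A) :
    ∏ k ∈ t, (1 + y * f k) = 1 + y * ∑ k ∈ t, f k := by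
  classical
  induction t using Finset.induction_on with
  | empty => simp
  | insert _ _ hx ih =>
    rw [Finset.prod_insert hx, Finset.sum_insert hx, ih]
    have h : ∀ a b : A, (1 + y * a) * (1 + y * b) = 1 + y * (a + b) + y ^ 2 * (a * b) := by
      intro a b; ring
    rw [h, hy, zero_mul, add_zero]

/-- Equation (1) of the paper: in a commutative ring where `y ^ 2 = 0`, with
`(1 + s k)⁻ᵐ - 1` expanded as the (truncated) series
`∑_{i=1}^{D} (-1)^i C(m+i-1, i) (s k)^i`, the product
`∏_k (1 + (m-1)! y ((1+s k)⁻ᵐ - 1))` equals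
`1 + (m-1)! y ∑_{i≥1} (-1)^i C(m+i-1, i) p_i` where `p_i = ∑_k (s k)^i`. -/
theorem chern_class_identity (A : Type*) [CommRing A] (m N D : ℕ) (hm : 1 ≤ m)
    (y : A) (hy : y ^ 2 = 0) (s : Fin N → A) :
    ∏ k : Fin N, (1 + (Nat.factorial (m - 1) : A) * y *
        (∑ i ∈ Finset.Icc 1 D, (-1 : A) ^ i * (Nat.choose (m + i - 1) i : A) * s k ^ i)) =
      1 + (Nat.factorial (m - 1) : A) * y *
        ∑ i ∈ Finset.Icc 1 D, (-1 : A) ^ i * (Nat.choose (m + i - 1) i : A) *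
          (∑ k : Fin N, s k ^ i) := by
  have hy' : ((Nat.factorial (m - 1) : A) * y) ^ 2 = 0 := by
    rw [mul_pow, hy, mul_zero]
  have := prod_one_add_nilpotent ((Nat.factorial (m - 1) : A) * y) hy'
    Finset.univ (fun k : Fin N =>
      ∑ i ∈ Finset.Icc 1 D, (-1 : A) ^ i * (Nat.choose (m + i - 1) i : A) * s k ^ i)
  rw [this, Finset.sum_comm]
  simp_rw [Finset.mul_sum]
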